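/- Let f ∈ F[x_1,...,x_n] be a polynomial of total degree t_1 + ⋯ + t_n, where each t_i is a nonnegative integer, and assume the coefficient of the monomial x_1^{t_1} x_2^{t_2} ⋯ x_n^{t_n} in f is nonzero. Suppose (S_1,m_1), ..., (S_n,m_n) are multisets in F with d_i > t_i for each i. Then f ∉ I; in other words, there exist a point s = (s_1,...,s_n) ∈ S_1 × ⋯ × S_n and an exponent vector u = (u_1,...,u_n) with u_i < m_i(s_i) for each i such that f_u(s) ≠ 0. -/

import Mathlib

open MvPolynomial

/-- The Taylor coefficient `f_u(s)`: the coefficient of `x^u` in `f(x + s)`. -/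
noncomputable def taylorCoeff {F : Type*} [Field F] {n : ℕ}
    (f : MvPolynomial (Fin n) F) (s : Fin n → F) (u : Fin n →₀ ℕ) : F :=
  coeff u (aeval (fun i => X i + C (s i)) f)

/-- Membership in the ideal `I(s, w)`: all Taylor coefficients `f_u(s)` with
`u < w` (componentwise) vanish. -/
def memPointIdeal {F : Type*} [Field F] {n : ℕ}
    (f : MvPolynomial (Fin n) F) (s : Fin n → F) (w : Fin n → ℕ) : Prop :=
  ∀ u : Fin n →₀ ℕ, (∀ i, u i < w i) → taylorCoeff f s u = 0

/-- The polynomial `g_i(x_i) = ∏_{s ∈ S_i} (x_i - s)^{m_i(s)}`. -/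
noncomputable def gPoly {F : Type*} [Field F] {n : ℕ}
    (S : Fin n → Finset F) (m : Fin n → F → ℕ) (i : Fin n) : MvPolynomial (Fin n) F :=
  ∏ s ∈ S i, (X i - C s) ^ m i s

/-- The size `d_i = Σ_{s ∈ S_i} m_i(s)` of the multiset `(S_i, m_i)`. -/
def dSize {F : Type*} {n : ℕ} (S : Fin n → Finset F) (m : Fin n → F → ℕ) (i : Fin n) : ℕ :=
  ∑ s ∈ S i, m i s

namespace CNaux

section OneVarDiv
open Polynomial

/-- One-variable uniqueness: a polynomial of degree < Σ m(s) whose Taylor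
coefficients of order < m(s) vanish at every s ∈ S₀ is zero. -/
theorem oneVar {F : Type*} [Field F] (S₀ : Finset F) (m₀ : F → ℕ)
    (P : F[X]) (hdeg : P.natDegree < ∑ s ∈ S₀, m₀ s)
    (hvan : ∀ s ∈ S₀, ∀ u < m₀ s, (Polynomial.taylor s P).coeff u = 0) : P = 0 := by
  by_contra hP
  have hdvd : ∀ s ∈ S₀, (Polynomial.X - Polynomial.C s) ^ m₀ s ∣ P := by
    intro s hs
    have h1 : (Polynomial.X : F[X]) ^ m₀ s ∣ taylor s P := X_pow_dvd_iff.2 fun d hd => hvan s hs d hd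
    obtain ⟨Q, hQ⟩ := h1
    refine ⟨taylor (-s) Q, ?_⟩
    have := congrArg (taylor (-s)) hQ
    rw [taylor_taylor, neg_add_cancel, taylor_zero', taylor_mul] at this
    simpa [taylor_apply, sub_eq_add_neg] using this
  have hprod : (∏ s ∈ S₀, (Polynomial.X - Polynomial.C s) ^ m₀ s) ∣ P := by
    refine Finset.prod_dvd_of_coprime ?_ (fun s hs => hdvd s hs)
    intro a ha b hb hab
    exact (Polynomial.pairwise_coprime_X_sub_C (Function.injective_id) hab).pow
  have hnd : (∏ s ∈ S₀, (Polynomial.X - Polynomial.C s) ^ m₀ s).natDegree = ∑ s ∈ S₀, m₀ s := by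
    rw [Polynomial.natDegree_prod]
    · exact Finset.sum_congr rfl fun s _ => by
        rw [Polynomial.natDegree_pow, natDegree_X_sub_C, mul_one]
    · intro s _
      exact pow_ne_zero _ (X_sub_C_ne_zero s)
  have := Polynomial.natDegree_le_of_dvd hprod hP
  omega


theorem mydiv {F : Type*} [Field F] {σ : Type*} (g₀ : F[X]) (hg : g₀.Monic)
    (hd : 0 < g₀.natDegree) (D : ℕ) :
    ∀ N (p : (MvPolynomial σ F)[X]), p.natDegree ≤ N →
    (∀ k, p.coeff k ≠ 0 → (p.coeff k).totalDegree + k ≤ D) →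
    ∃ q r : (MvPolynomial σ F)[X],
      p = q * g₀.map (algebraMap F (MvPolynomial σ F)) + r ∧
      r.natDegree < g₀.natDegree ∧
      (∀ k, r.coeff k ≠ 0 → (r.coeff k).totalDegree + k ≤ D) ∧
      (∀ k, q.coeff k ≠ 0 → (q.coeff k).totalDegree + (k + g₀.natDegree) ≤ D) := by
  set R := MvPolynomial σ F
  set g : R[X] := g₀.map (algebraMap F R) with hgdef
  have hgm : g.Monic := hg.map _
  have hgnd : g.natDegree = g₀.natDegree := hg.natDegree_map _
  set d := g₀.natDegree
  intro N
  induction N with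
  | zero =>
    intro p hpN hp
    exact ⟨0, p, by ring, lt_of_le_of_lt hpN hd, hp, fun k hk => (hk (Polynomial.coeff_zero k)).elim⟩
  | succ N ih =>
    intro p hpN hp
    by_cases hlt : p.natDegree < d
    · exact ⟨0, p, by ring, hlt, hp, fun k hk => (hk (Polynomial.coeff_zero k)).elim⟩
    push_neg at hlt
    have hp0 : p ≠ 0 := by
      intro h; rw [h, natDegree_zero] at hlt; omega
    set Np := p.natDegree with hNp
    set a := p.coeff Np with ha
    have ha0 : a ≠ 0 := by rw [ha]; exact mt Polynomial.leadingCoeff_eq_zero.mp hp0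
    have haD : a.totalDegree + Np ≤ D := hp Np ha0
    set e := Np - d with he
    set term : R[X] := Polynomial.C a * (Polynomial.X ^ e * g) with hterm
    have hterm_coeff : ∀ k, term.coeff k = a * (if e ≤ k then MvPolynomial.C (g₀.coeff (k - e)) else 0) := by
      intro k
      rw [hterm, Polynomial.coeff_C_mul, coeff_X_pow_mul', Polynomial.coeff_map]
      simp only [apply_ite (a * ·), mul_zero]
      congr 1
    have hCaX : (Polynomial.C a * Polynomial.X ^ e : R[X]) ≠ 0 := by
      simp [Polynomial.C_eq_zero, ha0, pow_ne_zero, mul_ne_zero]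
    have hdegterm : term.degree = p.degree := by
      rw [hterm, ← mul_assoc, Monic.degree_mul hgm, degree_C_mul_X_pow e ha0,
        degree_eq_natDegree hp0, degree_eq_natDegree hgm.ne_zero, hgnd, ← Nat.cast_add]
      congr 1
      omega
    have hleadterm : term.leadingCoeff = a := by
      rw [hterm, ← mul_assoc, leadingCoeff_mul_monic hgm]
      simp [leadingCoeff_C_mul_X_pow]
    set p' : R[X] := p - term with hp'
    have hdeglt : p'.degree < p.degree := by
      rw [hp']
      exact degree_sub_lt hdegterm.symm hp0 (by rw [hleadterm]; rfl)
    have hp'coeff : ∀ k, p'.coeff k = p.coeff k - a * (if e ≤ k then MvPolynomial.C (g₀.coeff (k - e)) else 0) := by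
      intro k; rw [hp', Polynomial.coeff_sub, hterm_coeff]
    have hp'bound : ∀ k, p'.coeff k ≠ 0 → (p'.coeff k).totalDegree + k ≤ D := by
      intro k hk
      have hkle : k ≤ p'.natDegree := le_natDegree_of_ne_zero hk
      have hkNp : k ≤ Np := by
        have : p'.degree ≤ p.degree := le_of_lt hdeglt
        have := natDegree_le_natDegree this
        omega
      have h1 : (p.coeff k).totalDegree ≤ D - k := by
        by_cases h : p.coeff k = 0
        · simp [h]
        · have := hp k h; omega
      have h2 : (a * (if e ≤ k then MvPolynomial.C (g₀.coeff (k - e)) else 0)).totalDegree ≤ D - k := by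
        refine le_trans (MvPolynomial.totalDegree_mul _ _) ?_
        have : (if e ≤ k then MvPolynomial.C (g₀.coeff (k - e)) else (0 : R)).totalDegree = 0 := by
          split <;> simp
        rw [this, add_zero]
        omega
      rw [hp'coeff]
      have := le_trans (MvPolynomial.totalDegree_sub _ _) (max_le h1 h2)
      omega
    have hp'N : p'.natDegree ≤ N := by
      by_cases h0 : p' = 0
      · simp [h0]
      · have := Polynomial.natDegree_lt_natDegree h0 hdeglt
        omega
    obtain ⟨q', r', heq, hrdeg, hrb, hqb⟩ := ih p' hp'N hp'bound
    refine ⟨q' + Polynomial.C a * Polynomial.X ^ e, r', ?_, hrdeg, hrb, ?_⟩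
    · have : p = p' + term := by rw [hp']; ring
      rw [this, heq, hterm]; ring
    · intro k hk
      rw [Polynomial.coeff_add] at hk ⊢
      have hX : (Polynomial.C a * Polynomial.X ^ e : R[X]).coeff k = if k = e then a else 0 := by
        rw [Polynomial.coeff_C_mul, Polynomial.coeff_X_pow]
        split <;> simp
      rw [hX] at hk ⊢
      have h1 : (q'.coeff k).totalDegree ≤ D - (k + d) ∨ (q'.coeff k = 0 ∧ (k = e → k + d ≤ D)) := by
        by_cases h : q'.coeff k = 0
        · right; refine ⟨h, fun hke => ?_⟩
          subst hke; rw [hgnd] at *; omega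
        · left; have := hqb k h; omega
      have h2 : (if k = e then a else 0).totalDegree ≤ D - (k + d) := by
        split
        · subst ‹k = e›; omega
        · simp
      refine le_trans ?_ (show (D - (k+d)) + (k+d) ≤ D by
        rcases h1 with h1 | ⟨h1, h1'⟩
        · have := hqb  -- need k + d ≤ D
          by_cases hq0 : q'.coeff k = 0
          · rw [hq0, zero_add] at hk
            have : k = e := by by_contra hh; simp [hh] at hk
            subst this
            omega
          · have := hqb k hq0; omega
        · rw [h1, zero_add] at hk
          have : k = e := by by_contra hh; simp [hh] at hk
          omega)
      gcongr
      refine le_trans (MvPolynomial.totalDegree_add _ _) (max_le ?_ h2)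
      rcases h1 with h1 | ⟨h1, _⟩
      · exact h1
      · simp [h1]

end OneVarDiv


variable {F : Type*} [Field F] {n : ℕ}

/-- Translation by `s` as an algebra endomorphism. -/
noncomputable def tr (s : Fin n → F) : MvPolynomial (Fin n) F →ₐ[F] MvPolynomial (Fin n) F :=
  MvPolynomial.aeval (fun i => X i + C (s i))

lemma taylorCoeff_def (f : MvPolynomial (Fin n) F) (s u) :
    taylorCoeff f s u = coeff u (tr s f) := rfl

lemma taylorCoeff_add (f g : MvPolynomial (Fin n) F) (s u) :
    taylorCoeff (f + g) s u = taylorCoeff f s u + taylorCoeff g s u := by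
  simp [taylorCoeff_def, map_add, MvPolynomial.coeff_add]

/-- Apply the linear functional `coeff u'` to each coefficient of a polynomial over
`MvPolynomial (Fin n) F`. -/
noncomputable def cextC (u' : Fin n →₀ ℕ) (p : Polynomial (MvPolynomial (Fin n) F)) : Polynomial F :=
  ⟨AddMonoidAlgebra.ofCoeff (p.toFinsupp.coeff.mapRange (MvPolynomial.coeff u') (coeff_zero u'))⟩

lemma cextC_coeff (u' : Fin n →₀ ℕ) (p : Polynomial (MvPolynomial (Fin n) F)) (k : ℕ) :
    (cextC u' p).coeff k = coeff u' (p.coeff k) := rfl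

lemma cextC_natDegree_le (u' : Fin n →₀ ℕ) (p : Polynomial (MvPolynomial (Fin n) F)) :
    (cextC u' p).natDegree ≤ p.natDegree := by
  refine Polynomial.natDegree_le_iff_coeff_eq_zero.2 fun N hN => ?_
  rw [cextC_coeff, Polynomial.coeff_eq_zero_of_natDegree_lt hN]
  simp

/-- `cextC` commutes with Taylor translation by a constant. -/
lemma cextC_taylor (u' : Fin n →₀ ℕ) (c : F) (B : Polynomial (MvPolynomial (Fin n) F)) :
    cextC u' (Polynomial.taylor (C c) B) = Polynomial.taylor c (cextC u' B) := by
  ext j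
  rw [cextC_coeff, Polynomial.taylor_coeff, Polynomial.taylor_coeff]
  have h1 : (Polynomial.hasseDeriv j B).natDegree < B.natDegree + 1 := by
    have := Polynomial.natDegree_hasseDeriv_le B j
    omega
  have h2 : (Polynomial.hasseDeriv j (cextC u' B)).natDegree < B.natDegree + 1 := by
    have h := Polynomial.natDegree_hasseDeriv_le (cextC u' B) j
    have h' := cextC_natDegree_le u' B
    omega
  rw [Polynomial.eval_eq_sum_range' h1, Polynomial.eval_eq_sum_range' h2, MvPolynomial.coeff_sum]
  refine Finset.sum_congr rfl fun i _ => ?_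
  rw [Polynomial.hasseDeriv_coeff, Polynomial.hasseDeriv_coeff, cextC_coeff]
  have : ((i + j).choose j : MvPolynomial (Fin n) F) * B.coeff (i + j) * (C c) ^ i
      = C (((i + j).choose j : F) * c ^ i) * B.coeff (i + j) := by
    rw [map_mul, map_pow, map_natCast]
    ring
  rw [this, MvPolynomial.coeff_C_mul]
  ring

lemma finSuccEquiv_C (a : F) :
    MvPolynomial.finSuccEquiv F n (C a) = Polynomial.C (C a) := by
  simp [MvPolynomial.finSuccEquiv_apply]

/-- Key structural identity: translating then applying `finSuccEquiv`. -/
lemma finSuccEquiv_tr (s : Fin (n + 1) → F) (f : MvPolynomial (Fin (n + 1)) F) :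
    MvPolynomial.finSuccEquiv F n (tr s f) =
      Polynomial.taylor (C (s 0))
        ((MvPolynomial.finSuccEquiv F n f).map (tr (fun i => s i.succ)).toRingHom) := by
  induction f using MvPolynomial.induction_on with
  | C a =>
    simp only [tr, aeval_C, MvPolynomial.algebraMap_eq]
    rw [finSuccEquiv_C]
    rw [Polynomial.map_C, Polynomial.taylor_C]
    simp [tr, aeval_C, MvPolynomial.algebraMap_eq]
  | add p q hp hq =>
    rw [map_add, map_add, map_add, Polynomial.map_add, map_add, hp, hq]
  | mul_X p i hp =>
    rw [map_mul, map_mul, map_mul, Polynomial.map_mul, Polynomial.taylor_mul, hp]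
    refine congrArg₂ (· * ·) rfl ?_
    refine Fin.cases ?_ ?_ i
    · rw [show tr s (X (0 : Fin (n+1))) = X 0 + C (s 0) from aeval_X _ _]
      rw [map_add, MvPolynomial.finSuccEquiv_X_zero, finSuccEquiv_C]
      simp [Polynomial.taylor_X]
    · intro j
      rw [show tr s (X j.succ) = X j.succ + C (s j.succ) from aeval_X _ _]
      rw [map_add, MvPolynomial.finSuccEquiv_X_succ, finSuccEquiv_C,
        Polynomial.map_C, Polynomial.taylor_C]
      rw [show (tr (fun i => s i.succ)).toRingHom (X j) = X j + C (s j.succ) from aeval_X _ _]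
      rw [← Polynomial.C_add]

/-- The master identity. -/
lemma master (f : MvPolynomial (Fin (n + 1)) F) (s : Fin (n + 1) → F) (u : Fin (n + 1) →₀ ℕ) :
    taylorCoeff f s u =
      (Polynomial.taylor (s 0)
        (cextC (Finsupp.tail u)
          ((MvPolynomial.finSuccEquiv F n f).map (tr (fun i => s i.succ)).toRingHom))).coeff
        (u 0) := by
  rw [← cextC_taylor, cextC_coeff, ← finSuccEquiv_tr, taylorCoeff_def,
    MvPolynomial.finSuccEquiv_coeff_coeff, Finsupp.cons_tail]


lemma coeff_X_pow_mul_eq_zero {N : ℕ} {i : Fin N} {M : ℕ} {v : Fin N →₀ ℕ} (h : v i < M)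
    (r : MvPolynomial (Fin N) F) : coeff v (X i ^ M * r) = 0 := by
  rw [MvPolynomial.coeff_mul]
  refine Finset.sum_eq_zero ?_
  rintro ⟨a, b⟩ hab
  rw [Finset.HasAntidiagonal.mem_antidiagonal] at hab
  rw [MvPolynomial.coeff_X_pow]
  have hne : ¬ (Finsupp.single i M = a) := by
    intro heq
    have hv : v i = a i + b i := by rw [← hab]; rfl
    rw [← heq] at hv
    simp [Finsupp.single_eq_same] at hv
    omega
  rw [if_neg hne, zero_mul]

lemma vanish_mul {N : ℕ} (S0 : Finset F) (m0 : F → ℕ) (i : Fin N)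
    (A : MvPolynomial (Fin N) F) (s : Fin N → F) (hs : s i ∈ S0) (u : Fin N →₀ ℕ)
    (hu : u i < m0 (s i)) :
    taylorCoeff (A * ∏ c ∈ S0, (X i - C c) ^ m0 c) s u = 0 := by
  classical
  rw [taylorCoeff_def, map_mul]
  have hG : tr s (∏ c ∈ S0, (X i - C c) ^ m0 c)
      = X i ^ m0 (s i) * ∏ c ∈ S0.erase (s i), ((X i + C (s i) - C c) ^ m0 c) := by
    rw [map_prod, ← Finset.mul_prod_erase _ _ hs]
    congr 1
    · rw [map_pow, map_sub]
      congr 1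
      simp [tr, MvPolynomial.algebraMap_eq]
    · refine Finset.prod_congr rfl fun c _ => ?_
      rw [map_pow, map_sub]
      simp [tr, MvPolynomial.algebraMap_eq]
  rw [hG, show tr s A * (X i ^ m0 (s i) *
      ∏ c ∈ S0.erase (s i), ((X i + C (s i) - C c) ^ m0 c)) =
      X i ^ m0 (s i) * (tr s A *
      ∏ c ∈ S0.erase (s i), ((X i + C (s i) - C c) ^ m0 c)) by ring]
  exact coeff_X_pow_mul_eq_zero hu _

lemma sum_support_eq {N : ℕ} (d : Fin N →₀ ℕ) : ∑ i ∈ d.support, d i = ∑ i, d i :=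
  Finset.sum_subset (Finset.subset_univ _) (fun i _ h => Finsupp.notMem_support_iff.mp h)

lemma g0_monic (S0 : Finset F) (m0 : F → ℕ) :
    (∏ c ∈ S0, (Polynomial.X - Polynomial.C c) ^ m0 c).Monic :=
  Polynomial.monic_prod_of_monic _ _ fun c _ => (Polynomial.monic_X_sub_C c).pow _

lemma g0_natDegree (S0 : Finset F) (m0 : F → ℕ) :
    (∏ c ∈ S0, (Polynomial.X - Polynomial.C c) ^ m0 c).natDegree = ∑ c ∈ S0, m0 c := by
  rw [Polynomial.natDegree_prod]
  · exact Finset.sum_congr rfl fun c _ => by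
      rw [Polynomial.natDegree_pow, Polynomial.natDegree_X_sub_C, mul_one]
  · intro c _
    exact pow_ne_zero _ (Polynomial.X_sub_C_ne_zero c)

lemma symm_map_g (S0 : Finset F) (m0 : F → ℕ) :
    (MvPolynomial.finSuccEquiv F n).symm
        ((∏ c ∈ S0, (Polynomial.X - Polynomial.C c) ^ m0 c).map
          (algebraMap F (MvPolynomial (Fin n) F)))
      = ∏ c ∈ S0, (X (0 : Fin (n + 1)) - C c) ^ m0 c := by
  apply (MvPolynomial.finSuccEquiv F n).injective
  rw [AlgEquiv.apply_symm_apply, map_prod, Polynomial.map_prod]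
  refine Finset.prod_congr rfl fun c _ => ?_
  rw [Polynomial.map_pow, Polynomial.map_sub, Polynomial.map_X, Polynomial.map_C,
    map_pow, map_sub, MvPolynomial.finSuccEquiv_X_zero, finSuccEquiv_C]
  rw [MvPolynomial.algebraMap_eq]


theorem main_aux : ∀ (N : ℕ) (S : Fin N → Finset F) (m : Fin N → F → ℕ) (t : Fin N → ℕ),
    (∀ i, t i < ∑ c ∈ S i, m i c) →
    ∀ f : MvPolynomial (Fin N) F, f.totalDegree ≤ ∑ i, t i →
    (∀ s : Fin N → F, (∀ i, s i ∈ S i) →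
      ∀ u : Fin N →₀ ℕ, (∀ i, u i < m i (s i)) → taylorCoeff f s u = 0) →
    coeff (Finsupp.equivFunOnFinite.symm t) f = 0 := by
  intro N
  induction N with
  | zero =>
    intro S m t hd f hdeg hvan
    have h := hvan (fun j => j.elim0) (fun i => i.elim0) 0 (fun i => i.elim0)
    have htr : tr (fun j : Fin 0 => (Fin.elim0 j : F)) = AlgHom.id F _ :=
      MvPolynomial.algHom_ext fun i => i.elim0
    rw [taylorCoeff_def, htr] at h
    have h0 : (Finsupp.equivFunOnFinite.symm t) = 0 := by
      ext i; exact i.elim0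
    rw [h0]
    simpa using h
  | succ n ih =>
    intro S m t hd f hdeg hvan
    set σe := MvPolynomial.finSuccEquiv F n with hσe
    set g₀ : Polynomial F := ∏ c ∈ S 0, (Polynomial.X - Polynomial.C c) ^ m 0 c with hg₀
    have hgm : g₀.Monic := g0_monic _ _
    have hgnd : g₀.natDegree = ∑ c ∈ S 0, m 0 c := g0_natDegree _ _
    have hd0 : 0 < g₀.natDegree := by rw [hgnd]; exact lt_of_le_of_lt (Nat.zero_le _) (hd 0)
    obtain ⟨q, r, heq, hrdeg, hrb, hqb⟩ :=
      mydiv g₀ hgm hd0 (∑ i, t i) (σe f).natDegree (σe f) le_rfl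
        (fun k hk => le_trans (MvPolynomial.totalDegree_coeff_finSuccEquiv_add_le f k hk) hdeg)
    set gR := g₀.map (algebraMap F (MvPolynomial (Fin n) F)) with hgR
    -- decomposition of f
    have hfd : f = σe.symm (q * gR) + σe.symm r := by
      apply σe.injective
      rw [map_add, AlgEquiv.apply_symm_apply, AlgEquiv.apply_symm_apply]
      exact heq
    -- Taylor data of the remainder part vanishes on the grid
    have hvr : ∀ s : Fin (n+1) → F, (∀ i, s i ∈ S i) →
        ∀ u : Fin (n+1) →₀ ℕ, (∀ i, u i < m i (s i)) → taylorCoeff (σe.symm r) s u = 0 := by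
      intro s hs u hu
      have h1 : taylorCoeff f s u = 0 := hvan s hs u hu
      have h2 : taylorCoeff (σe.symm (q * gR)) s u = 0 := by
        rw [map_mul, hgR, symm_map_g]
        exact vanish_mul (S 0) (m 0) 0 _ s (hs 0) u (hu 0)
      rw [hfd, taylorCoeff_add, h2, zero_add] at h1
      exact h1
    -- all Taylor data of the coefficients of r vanish
    have hPzero : ∀ k, ∀ s' : Fin n → F, (∀ i, s' i ∈ S i.succ) →
        ∀ u' : Fin n →₀ ℕ, (∀ i, u' i < m i.succ (s' i)) →
        taylorCoeff (r.coeff k) s' u' = 0 := by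
      intro k s' hs' u' hu'
      have hP : cextC u' (r.map (tr s').toRingHom) = 0 := by
        apply oneVar (S 0) (m 0)
        · rw [← hgnd]
          exact lt_of_le_of_lt
            (le_trans (cextC_natDegree_le _ _) Polynomial.natDegree_map_le) hrdeg
        · intro s0 hs0 u0 hu0
          have hm := master (σe.symm r) (Fin.cons s0 s') (Finsupp.cons u0 u')
          rw [AlgEquiv.apply_symm_apply] at hm
          rw [show (Fin.cons s0 s' : Fin (n+1) → F) 0 = s0 from rfl,
            show (fun i : Fin n => (Fin.cons s0 s' : Fin (n+1) → F) i.succ) = s' from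
              funext fun j => by simp,
            Finsupp.tail_cons, Finsupp.cons_zero] at hm
          rw [← hm]
          refine hvr (Fin.cons s0 s') ?_ (Finsupp.cons u0 u') ?_
          · intro i
            refine Fin.cases ?_ ?_ i
            · simpa using hs0
            · intro j; simpa using hs' j
          · intro i
            refine Fin.cases ?_ ?_ i
            · simpa [Finsupp.cons_zero] using hu0
            · intro j; simpa [Finsupp.cons_succ] using hu' j
      have := congrArg (fun p => Polynomial.coeff p k) hP
      simp only [cextC_coeff, Polynomial.coeff_map, Polynomial.coeff_zero] at this
      rw [taylorCoeff_def]
      exact this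
    -- apply the induction hypothesis to the t 0 coefficient of r
    have hIH : coeff (Finsupp.equivFunOnFinite.symm (fun i => t i.succ)) (r.coeff (t 0)) = 0 := by
      refine ih (fun i => S i.succ) (fun i => m i.succ) (fun i => t i.succ)
        (fun i => hd i.succ) (r.coeff (t 0)) ?_ (fun s' hs' u' hu' => hPzero (t 0) s' hs' u' hu')
      by_cases h0 : r.coeff (t 0) = 0
      · simp [h0]
      · show (r.coeff (t 0)).totalDegree ≤ ∑ i : Fin n, t i.succ
        have := hrb (t 0) h0
        have hsum : ∑ i, t i = t 0 + ∑ i : Fin n, t i.succ := Fin.sum_univ_succ t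
        omega
    -- the cons decomposition of the target exponent
    have hcons : Finsupp.equivFunOnFinite.symm t =
        (Finsupp.equivFunOnFinite.symm (fun i => t i.succ)).cons (t 0) := by
      ext i
      refine Fin.cases ?_ ?_ i
      · simp [Finsupp.cons_zero]
      · intro j; simp [Finsupp.cons_succ]
    rw [hfd, MvPolynomial.coeff_add]
    have c1 : coeff (Finsupp.equivFunOnFinite.symm t) (σe.symm r) = 0 := by
      rw [hcons, ← MvPolynomial.finSuccEquiv_coeff_coeff, ← hσe, AlgEquiv.apply_symm_apply]
      exact hIH
    have c2 : coeff (Finsupp.equivFunOnFinite.symm t) (σe.symm (q * gR)) = 0 := by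
      rw [hcons, ← MvPolynomial.finSuccEquiv_coeff_coeff, ← hσe, AlgEquiv.apply_symm_apply]
      rw [Polynomial.coeff_mul, MvPolynomial.coeff_sum]
      refine Finset.sum_eq_zero ?_
      rintro ⟨a, b⟩ hab
      rw [Finset.HasAntidiagonal.mem_antidiagonal] at hab
      rw [hgR, Polynomial.coeff_map, MvPolynomial.algebraMap_eq]
      have hqa : coeff (Finsupp.equivFunOnFinite.symm (fun i => t i.succ)) (q.coeff a) = 0 := by
        by_cases hq0 : q.coeff a = 0
        · simp [hq0]
        apply MvPolynomial.coeff_eq_zero_of_totalDegree_lt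
        have h1 := hqb a hq0
        have hsum : ∑ i, t i = t 0 + ∑ i : Fin n, t i.succ := Fin.sum_univ_succ t
        have hb : b ≤ t 0 := by omega
        have hlt : t 0 < g₀.natDegree := by rw [hgnd]; exact hd 0
        have hss : ∑ i ∈ (Finsupp.equivFunOnFinite.symm (fun i : Fin n => t i.succ)).support,
            (Finsupp.equivFunOnFinite.symm (fun i : Fin n => t i.succ)) i
            = ∑ i : Fin n, t i.succ := by
          rw [sum_support_eq]
          refine Finset.sum_congr rfl fun i _ => ?_
          simp
        rw [hss]
        omega
      rw [mul_comm, MvPolynomial.coeff_C_mul, hqa, mul_zero]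
    rw [c1, c2, add_zero]


end CNaux

/-- The nonvanishing theorem for multisets: if `deg f = Σ t_i`, the coefficient of
`x_1^{t_1} ⋯ x_n^{t_n}` in `f` is nonzero, and `d_i > t_i` for all `i`, then `f ∉ I`:
there are `s ∈ S` and `u < m(s)` with `f_u(s) ≠ 0`. -/
theorem stmt_5 {F : Type*} [Field F] {n : ℕ} (hn : 1 ≤ n)
    (S : Fin n → Finset F) (hS : ∀ i, (S i).Nonempty)
    (m : Fin n → F → ℕ) (hm : ∀ i, ∀ s ∈ S i, 1 ≤ m i s)
    (t : Fin n → ℕ) (f : MvPolynomial (Fin n) F)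
    (hdeg : f.totalDegree = ∑ i, t i)
    (hcoeff : coeff (Finsupp.equivFunOnFinite.symm t) f ≠ 0)
    (hd : ∀ i, t i < dSize S m i) :
    ∃ s : Fin n → F, (∀ i, s i ∈ S i) ∧
      ∃ u : Fin n →₀ ℕ, (∀ i, u i < m i (s i)) ∧ taylorCoeff f s u ≠ 0 := by
  by_contra hc
  push_neg at hc
  refine hcoeff (CNaux.main_aux n S m t hd f (le_of_eq hdeg) ?_)
  intro s hs u hu
  exact hc s hs u hu
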